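/- arXiv:2306.06817 — 4 statements merged into one kernel-verified Lean document; each statement's English description precedes it below -/
import Mathlib

section
/- Let R be a ring, E an R-module, B a submodule, A = E/B, and suppose the image of Ω : End_R(E;B) → End_R(B) × End_R(A) consists exactly of the pairs (c·id_B, c·id_A) for scalars c in the center of R acting on B and A. Then the ring End_R(E;B) is commutative. -/
/-- The subring `End_R(E;B)` of `End_R(E)` consisting of the endomorphisms
stabilizing the submodule `B`. -/
def endStab {R E : Type*} [Ring R] [AddCommGroup E] [Module R E]
    (B : Submodule R E) : Subring (Module.End R E) where
  carrier := {φ | ∀ x ∈ B, φ x ∈ B}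
  zero_mem' := fun x _ => by simp [B.zero_mem]
  one_mem' := fun x hx => hx
  add_mem' := fun {φ ψ} hφ hψ x hx => by
    simpa using B.add_mem (hφ x hx) (hψ x hx)
  neg_mem' := fun {φ} hφ x hx => by simpa using B.neg_mem (hφ x hx)
  mul_mem' := fun {φ ψ} hφ hψ x hx => hφ _ (hψ x hx)

/-- The ring homomorphism `Ω : End_R(E;B) → End_R(B) × End_R(E/B)`,
`φ ↦ (φ|_B, induced map on E/B)`. -/
def Omega {R E : Type*} [Ring R] [AddCommGroup E] [Module R E]
    (B : Submodule R E) :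
    endStab B →+* (Module.End R B) × (Module.End R (E ⧸ B)) where
  toFun φ := ((φ : Module.End R E).restrict φ.2,
    Submodule.mapQ B B (φ : Module.End R E) (fun x hx => φ.2 x hx))
  map_one' := by
    refine Prod.ext ?_ ?_
    · ext x; rfl
    · refine LinearMap.ext fun x => ?_
      obtain ⟨y, rfl⟩ := Submodule.Quotient.mk_surjective B x
      simp [Submodule.mapQ_apply]
  map_mul' φ ψ := by
    refine Prod.ext ?_ ?_
    · ext x; rfl
    · refine LinearMap.ext fun x => ?_
      obtain ⟨y, rfl⟩ := Submodule.Quotient.mk_surjective B x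
      simp [Submodule.mapQ_apply]
  map_zero' := by
    refine Prod.ext ?_ ?_
    · ext x; rfl
    · refine LinearMap.ext fun x => ?_
      obtain ⟨y, rfl⟩ := Submodule.Quotient.mk_surjective B x
      simp [Submodule.mapQ_apply]
  map_add' φ ψ := by
    refine Prod.ext ?_ ?_
    · ext x; rfl
    · refine LinearMap.ext fun x => ?_
      obtain ⟨y, rfl⟩ := Submodule.Quotient.mk_surjective B x
      simp [Submodule.mapQ_apply]


/-- If the image of `Ω : End_R(E;B) → End_R(B) × End_R(E/B)` consists exactly
of the pairs `(c • id_B, c • id_{E/B})` for scalars `c`, then the ring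
`End_R(E;B)` is commutative. -/
theorem stmt6 {R E : Type*} [CommRing R] [AddCommGroup E] [Module R E]
    (B : Submodule R E)
    (h : Set.range (Omega B) =
      {p : (Module.End R B) × (Module.End R (E ⧸ B)) |
        ∃ c : R, p = (c • (1 : Module.End R B), c • (1 : Module.End R (E ⧸ B)))}) :
    ∀ φ ψ : endStab B, φ * ψ = ψ * φ := by
  intro φ ψ
  have hφ : Omega B φ ∈ Set.range (Omega B) := ⟨φ, rfl⟩
  have hψ : Omega B ψ ∈ Set.range (Omega B) := ⟨ψ, rfl⟩
  rw [h] at hφ hψ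
  obtain ⟨c, hc⟩ := hφ
  obtain ⟨d, hd⟩ := hψ
  have hc1 : (φ : Module.End R E).restrict φ.2 = c • 1 := congrArg Prod.fst hc
  have hc2 : Submodule.mapQ B B (φ : Module.End R E) (fun x hx => φ.2 x hx)
      = c • 1 := congrArg Prod.snd hc
  have hd1 : (ψ : Module.End R E).restrict ψ.2 = d • 1 := congrArg Prod.fst hd
  have hd2 : Submodule.mapQ B B (ψ : Module.End R E) (fun x hx => ψ.2 x hx)
      = d • 1 := congrArg Prod.snd hd
  have hφB : ∀ x ∈ B, (φ : Module.End R E) x = c • x := by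
    intro x hx
    have := LinearMap.congr_fun hc1 ⟨x, hx⟩
    simp [LinearMap.restrict_apply, Subtype.ext_iff] at this; exact this
  have hψB : ∀ x ∈ B, (ψ : Module.End R E) x = d • x := by
    intro x hx
    have := LinearMap.congr_fun hd1 ⟨x, hx⟩
    simp [LinearMap.restrict_apply, Subtype.ext_iff] at this; exact this
  have hφQ : ∀ x : E, (φ : Module.End R E) x - c • x ∈ B := by
    intro x
    have := LinearMap.congr_fun hc2 (Submodule.Quotient.mk x)
    simp only [Submodule.mapQ_apply, LinearMap.smul_apply, Module.End.one_apply] at this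
    rwa [← Submodule.Quotient.mk_smul, Submodule.Quotient.eq] at this
  have hψQ : ∀ x : E, (ψ : Module.End R E) x - d • x ∈ B := by
    intro x
    have := LinearMap.congr_fun hd2 (Submodule.Quotient.mk x)
    simp only [Submodule.mapQ_apply, LinearMap.smul_apply, Module.End.one_apply] at this
    rwa [← Submodule.Quotient.mk_smul, Submodule.Quotient.eq] at this
  ext x
  show (φ : Module.End R E) ((ψ : Module.End R E) x)
      = (ψ : Module.End R E) ((φ : Module.End R E) x)
  set f := (φ : Module.End R E)
  set g := (ψ : Module.End R E)
  have e1 : f (g x) = c • (g x - d • x) + d • f x := by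
    have h1 := hφB _ (hψQ x)
    rw [map_sub, map_smul] at h1
    linear_combination (norm := module) h1
  have e2 : g (f x) = d • (f x - c • x) + c • g x := by
    have h1 := hψB _ (hφQ x)
    rw [map_sub, map_smul] at h1
    linear_combination (norm := module) h1
  rw [e1, e2]
  module
end

section
/- Let K be a field, G = {[[1,a,b],[0,1,a],[0,0,1]] : a,b ∈ K} acting on E = K³, and B = span(e₁,e₂). For every proper G-subrepresentation C of B, the extension of the trivial representation K by B/C obtained as the image of E/C (i.e., the short exact sequence 0 → B/C → E/C → K → 0) does not split as a sequence of G-representations. -/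
/-- Total nonsplitting: for the unitriangular group
`G = {[[1,a,b],[0,1,a],[0,0,1]]}` acting on `E = K³` with
`B = span(e₀,e₁) = ker(proj 2)`, for every proper `G`-stable subspace
`C < B`, the short exact sequence `0 → B/C → E/C → K → 0` admits no
`G`-equivariant splitting, i.e. the map `E/C → K` induced by `proj 2`
admits no `G`-equivariant linear section. -/
theorem stmt10 {K : Type*} [Field K]
    (C : Submodule K (Fin 3 → K))
    (hC : ∀ a b : K, ∀ x ∈ C,
      (Matrix.mulVecLin !![1, a, b; 0, 1, a; 0, 0, 1]) x ∈ C)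
    (hCB : C < LinearMap.ker (LinearMap.proj 2 : (Fin 3 → K) →ₗ[K] K)) :
    ¬ ∃ s : K →ₗ[K] ((Fin 3 → K) ⧸ C),
      (Submodule.liftQ C (LinearMap.proj 2 : (Fin 3 → K) →ₗ[K] K) hCB.le) ∘ₗ s
        = LinearMap.id ∧
      ∀ a b : K,
        (Submodule.mapQ C C (Matrix.mulVecLin !![1, a, b; 0, 1, a; 0, 0, 1])
          (fun x hx => hC a b x hx)) ∘ₗ s = s := by
  rintro ⟨s, hsec, hequiv⟩
  obtain ⟨x, hx⟩ := Submodule.Quotient.mk_surjective C (s 1)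
  -- x 2 = 1
  have hx2 : x 2 = 1 := by
    have := congrArg (fun f => f 1) hsec
    simp only [LinearMap.comp_apply, LinearMap.id_apply] at this
    rw [← hx] at this
    simpa using this
  -- key: for all a b, g·x - x ∈ C
  have key : ∀ a b : K,
      (Matrix.mulVecLin !![1, a, b; 0, 1, a; 0, 0, 1]) x - x ∈ C := by
    intro a b
    have := congrArg (fun f => f 1) (hequiv a b)
    simp only [LinearMap.comp_apply] at this
    rw [← hx, Submodule.mapQ_apply] at this
    exact (Submodule.Quotient.eq C).mp this
  have hdiff : ∀ a b : K,
      (Matrix.mulVecLin !![1, a, b; 0, 1, a; 0, 0, 1]) x - x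
        = ![a * x 1 + b, a, 0] := by
    intro a b
    funext i
    fin_cases i <;>
      simp [Matrix.mulVecLin_apply, Matrix.mulVec, dotProduct,
        Fin.sum_univ_three, hx2] <;> ring
  have k10 : (![x 1 + 1, 1, 0] : Fin 3 → K) ∈ C := by
    have := key 1 1; rwa [hdiff, one_mul] at this
  have k00 : (![x 1, 1, 0] : Fin 3 → K) ∈ C := by
    have := key 1 0; rwa [hdiff, one_mul, add_zero] at this
  have he0 : (![1, 0, 0] : Fin 3 → K) ∈ C := by
    have := C.sub_mem k10 k00
    convert this using 1
    funext i; fin_cases i <;> simp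
  have he1 : (![0, 1, 0] : Fin 3 → K) ∈ C := by
    have := C.sub_mem k00 (C.smul_mem (x 1) he0)
    convert this using 1
    funext i; fin_cases i <;> simp
  obtain ⟨y, hyB, hyC⟩ := SetLike.exists_of_lt hCB
  have hy2 : y 2 = 0 := hyB
  apply hyC
  have : y = y 0 • ![1, 0, 0] + y 1 • ![0, 1, 0] := by
    funext i; fin_cases i <;> simp [hy2]
  rw [this]
  exact C.add_mem (C.smul_mem _ he0) (C.smul_mem _ he1)
end

section
/- Let G be a group, K a field of characteristic zero, and 0 → B → E →π→ A → 0 an exact sequence of finite-dimensional K[G]-modules with A, B nonzero. Suppose that for every G-equivariant endomorphism Φ of Hom(A,E)† stabilizing Hom_K(A,B), the pair of induced maps (on Hom_K(A,B) and on the one-dimensional quotient) is (c·id, c·id) for some c ∈ K. Then for every G-equivariant endomorphism φ of E with φ(B) ⊆ B, the induced maps φ_B on B and φ_A on A are both equal to a·id for a common scalar a ∈ K. -/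
/-- `Hom(A,E)† = {f : A →ₗ[K] E | π ∘ f is a scalar multiple of id_A}`,
as a subspace of `Hom_K(A,E)`. -/
def dagger {K A E : Type*} [Field K]
    [AddCommGroup A] [Module K A] [AddCommGroup E] [Module K E]
    (π : E →ₗ[K] A) : Submodule K (A →ₗ[K] E) where
  carrier := {f | ∃ c : K, π ∘ₗ f = c • (LinearMap.id : A →ₗ[K] A)}
  zero_mem' := ⟨0, by simp⟩
  add_mem' := by
    rintro f g ⟨c, hc⟩ ⟨d, hd⟩
    exact ⟨c + d, by rw [LinearMap.comp_add, hc, hd, add_smul]⟩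
  smul_mem' := by
    rintro c f ⟨d, hd⟩
    exact ⟨c * d, by rw [LinearMap.comp_smul, hd, smul_smul]⟩

/-- Reduction of the theorems to the case `A = 𝟙`: let
`0 → B → E →π→ A → 0` be an exact sequence of finite-dimensional
representations of `G` over a field `K` of characteristic zero, with `A`, `B`
nonzero. Suppose that every `G`-equivariant endomorphism `Φ` of `Hom(A,E)†`
stabilizing `Hom_K(A,B) = {f : π ∘ f = 0}` induces a pair `(c • id, c • id)`
on `Hom_K(A,B)` and on the one-dimensional quotient. Then every
`G`-equivariant endomorphism `φ` of `E` stabilizing `B = ker π` induces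
`a • id` on both `B` and `A`, for a common scalar `a`. -/
theorem stmt15 {K G A E : Type*} [Field K] [CharZero K] [Group G]
    [AddCommGroup A] [Module K A] [FiniteDimensional K A] [Nontrivial A]
    [AddCommGroup E] [Module K E] [FiniteDimensional K E]
    (ρA : Representation K G A) (ρE : Representation K G E)
    (π : E →ₗ[K] A) (hsurj : Function.Surjective π)
    (hπ : ∀ g : G, π ∘ₗ ρE g = ρA g ∘ₗ π)
    (hB : LinearMap.ker π ≠ ⊥)
    (hyp : ∀ Φ : ↥(dagger π) →ₗ[K] ↥(dagger π),
      -- `Φ` is `G`-equivariant for the conjugation action on `Hom(A,E)†`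
      (∀ (g : G) (f f' : ↥(dagger π)),
        (f' : A →ₗ[K] E) = (ρA.linHom ρE) g (f : A →ₗ[K] E) →
        ((Φ f' : A →ₗ[K] E)) = (ρA.linHom ρE) g ((Φ f : A →ₗ[K] E))) →
      -- `Φ` stabilizes `Hom_K(A,B)`
      (∀ f : ↥(dagger π), π ∘ₗ (f : A →ₗ[K] E) = 0 →
        π ∘ₗ ((Φ f : A →ₗ[K] E)) = 0) →
      -- then the pair induced by `Φ` is `(c • id, c • id)` for some scalar `c`
      ∃ c : K,
        (∀ f : ↥(dagger π), π ∘ₗ (f : A →ₗ[K] E) = 0 →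
          ((Φ f : A →ₗ[K] E)) = c • (f : A →ₗ[K] E)) ∧
        (∀ f : ↥(dagger π),
          π ∘ₗ ((Φ f : A →ₗ[K] E)) = c • (π ∘ₗ (f : A →ₗ[K] E)))) :
    ∀ φ : E →ₗ[K] E, (∀ g : G, φ ∘ₗ ρE g = ρE g ∘ₗ φ) →
      (∀ x ∈ LinearMap.ker π, φ x ∈ LinearMap.ker π) →
      ∃ a : K, (∀ x ∈ LinearMap.ker π, φ x = a • x) ∧
        (∀ x : E, π (φ x) = a • π x) := by
  intro φ hφg hφB
  -- choose a linear section of π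
  obtain ⟨s, hs⟩ := π.exists_rightInverse_of_surjective (LinearMap.range_eq_top.mpr hsurj)
  have hs' : ∀ a : A, π (s a) = a := fun a => by
    have := LinearMap.ext_iff.mp hs a; simpa using this
  -- the induced endomorphism of A
  set ψ : A →ₗ[K] A := π ∘ₗ φ ∘ₗ s with hψdef
  have hker : ∀ x : E, π (φ x) = ψ (π x) := by
    intro x
    have h1 : s (π x) - x ∈ LinearMap.ker π := by
      rw [LinearMap.mem_ker, map_sub, hs', sub_self]
    have h2 := hφB _ h1
    rw [LinearMap.mem_ker, map_sub, map_sub, sub_eq_zero] at h2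
    simpa [hψdef] using h2.symm
  have hψπ : π ∘ₗ φ = ψ ∘ₗ π := LinearMap.ext fun x => hker x
  have hψcomm : ∀ g : G, ∀ a : A, ψ (ρA g a) = ρA g (ψ a) := by
    intro g a
    obtain ⟨x, rfl⟩ := hsurj a
    have hπg : ∀ y : E, π (ρE g y) = ρA g (π y) := fun y =>
      LinearMap.ext_iff.mp (hπ g) y
    have hφg' : ∀ y : E, φ (ρE g y) = ρE g (φ y) := fun y =>
      LinearMap.ext_iff.mp (hφg g) y
    rw [← hπg, ← hker, hφg', hπg, hker]
  -- the endomorphism Φ of Hom(A,E)†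
  have hmem : ∀ f : ↥(dagger π),
      φ ∘ₗ (f : A →ₗ[K] E) - (f : A →ₗ[K] E) ∘ₗ ψ ∈ dagger π := by
    intro f
    obtain ⟨c, hc⟩ := f.2
    have hc' : ∀ y : A, π ((f : A →ₗ[K] E) y) = c • y := fun y => by
      simpa using LinearMap.ext_iff.mp hc y
    refine ⟨0, ?_⟩
    ext x
    simp only [LinearMap.comp_apply, LinearMap.sub_apply, map_sub,
      LinearMap.smul_apply, LinearMap.id_apply, LinearMap.zero_apply, zero_smul]
    rw [hker, hc', hc', map_smul, sub_self]
  set Φ : ↥(dagger π) →ₗ[K] ↥(dagger π) :=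
    { toFun := fun f => ⟨φ ∘ₗ (f : A →ₗ[K] E) - (f : A →ₗ[K] E) ∘ₗ ψ, hmem f⟩
      map_add' := fun f g => Subtype.ext (by
        simp only [Submodule.coe_add, LinearMap.comp_add, LinearMap.add_comp]
        abel)
      map_smul' := fun c f => Subtype.ext (by
        simp only [SetLike.val_smul, LinearMap.comp_smul, LinearMap.smul_comp,
          RingHom.id_apply, smul_sub]) } with hΦdef
  have hΦval : ∀ f : ↥(dagger π),
      (Φ f : A →ₗ[K] E) = φ ∘ₗ (f : A →ₗ[K] E) - (f : A →ₗ[K] E) ∘ₗ ψ :=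
    fun f => rfl
  obtain ⟨c, h1, h2⟩ := hyp Φ
    (by
      intro g f f' hf'
      rw [hΦval, hΦval, hf']
      ext x
      have hφg' : ∀ y : E, φ (ρE g y) = ρE g (φ y) := fun y =>
        LinearMap.ext_iff.mp (hφg g) y
      simp only [Representation.linHom_apply, LinearMap.sub_apply,
        LinearMap.comp_apply, map_sub]
      rw [hφg', ← hψcomm g⁻¹]
    )
    (by
      intro f hf
      have hf' : ∀ y : A, π ((f : A →ₗ[K] E) y) = 0 := fun y => by
        simpa using LinearMap.ext_iff.mp hf y
      rw [hΦval]
      ext x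
      simp only [LinearMap.comp_apply, LinearMap.sub_apply, map_sub,
        LinearMap.zero_apply]
      rw [hker, hf', hf', map_zero, sub_self])
  -- evaluate at the section to conclude c = 0
  have hsmem : s ∈ dagger π := ⟨1, by rw [hs, one_smul]⟩
  have hc0 : c = 0 := by
    obtain ⟨a₀, ha₀⟩ := exists_ne (0 : A)
    have := LinearMap.ext_iff.mp (h2 ⟨s, hsmem⟩) a₀
    rw [hΦval] at this
    simp only [LinearMap.comp_apply, LinearMap.sub_apply, map_sub,
      LinearMap.smul_apply] at this
    rw [hker, hs', hs', sub_self] at this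
    exact (smul_eq_zero.mp this.symm).resolve_right ha₀
  -- the key identity: φ ∘ f = f ∘ ψ for every f : A → B
  have key : ∀ (l : A →ₗ[K] K) (b : E), b ∈ LinearMap.ker π →
      ∀ x : A, l x • φ b = l (ψ x) • b := by
    intro l b hb x
    have hf0 : π ∘ₗ (l.smulRight b) = 0 := by
      ext a
      simp [LinearMap.mem_ker.mp hb]
    have hfmem : l.smulRight b ∈ dagger π := ⟨0, by rw [hf0, zero_smul]⟩
    have := h1 ⟨l.smulRight b, hfmem⟩ hf0
    rw [hc0, zero_smul, hΦval, sub_eq_zero] at this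
    have := LinearMap.ext_iff.mp this x
    simpa using this
  -- choose a nonzero vector of A and a dual vector
  obtain ⟨a₀, ha₀⟩ := exists_ne (0 : A)
  obtain ⟨μ, hμ⟩ : ∃ μ : Module.Dual K A, μ a₀ ≠ 0 := by
    by_contra h
    push_neg at h
    exact ha₀ ((Module.forall_dual_apply_eq_zero_iff K a₀).mp h)
  set l₀ : A →ₗ[K] K := (μ a₀)⁻¹ • μ with hl₀def
  have hl₀ : l₀ a₀ = 1 := by
    simp [hl₀def, inv_mul_cancel₀ hμ]
  -- the scalar
  set a : K := l₀ (ψ a₀) with hadef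
  -- φ = a • id on B
  have hφb : ∀ b ∈ LinearMap.ker π, φ b = a • b := by
    intro b hb
    have := key l₀ b hb a₀
    rwa [hl₀, one_smul] at this
  -- ψ = a • id
  obtain ⟨b₀, hb₀mem, hb₀⟩ := Submodule.exists_mem_ne_zero_of_ne_bot hB
  have hψa : ∀ x : A, ψ x = a • x := by
    intro x
    have hall : ∀ l : Module.Dual K A, l (ψ x - a • x) = 0 := by
      intro l
      have := key l b₀ hb₀mem x
      rw [hφb b₀ hb₀mem, smul_smul] at this
      have h2 : (l (ψ x) - l x * a) • b₀ = 0 := by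
        rw [sub_smul, this, sub_self]
      have h3 := (smul_eq_zero.mp h2).resolve_right hb₀
      rw [sub_eq_zero] at h3
      rw [map_sub, map_smul, smul_eq_mul, h3]
      ring
    have := (Module.forall_dual_apply_eq_zero_iff K (ψ x - a • x)).mp hall
    rwa [sub_eq_zero] at this
  refine ⟨a, hφb, fun x => ?_⟩
  rw [hker, hψa]
end

section
/- Let K be a field and G a group. Suppose E is a finite-dimensional G-representation with subrepresentation B such that E/B is the trivial one-dimensional representation, and suppose the extension 0 → B → E → K → 0 is totally nonsplit, meaning: for every proper subrepresentation C ⊊ B, the induced sequence 0 → B/C → E/C → K → 0 has no G-equivariant splitting. If additionally every G-map E → B has kernel not contained in B, then every G-equivariant endomorphism φ of E with φ(B) ⊆ B satisfies: φ acts on B and on E/B by the same scalar a ∈ K. (Assume char K = 0.) -/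
/-- The `A = 𝟙` case of Theorems 2/3 of the paper: let `E` be a
finite-dimensional representation of `G` over a field `K` of characteristic
zero, `B` a subrepresentation with `E/B` the trivial one-dimensional
representation (given by an equivariant surjection `π : E → K` with kernel
`B`). Assume the extension `0 → B → E → K → 0` is totally nonsplit (for every
`G`-stable `C < B` the induced map `E/C → K` has no `G`-equivariant section)
and that every `G`-equivariant map `E → B` has kernel not contained in `B`.
Then every `G`-equivariant endomorphism `φ` of `E` with `φ(B) ⊆ B` acts on
`B` and on `E/B` by a common scalar `a`. -/
theorem stmt17 {K G E : Type*} [Field K] [CharZero K] [Group G]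
    [AddCommGroup E] [Module K E] [FiniteDimensional K E]
    (ρ : Representation K G E) (B : Submodule K E)
    (π : E →ₗ[K] K) (hsurj : Function.Surjective π)
    (hker : LinearMap.ker π = B)
    (hπ : ∀ g : G, π ∘ₗ ρ g = π)
    -- total nonsplitting
    (hTNS : ∀ C : Submodule K E, (hC : ∀ g : G, ∀ x ∈ C, ρ g x ∈ C) →
      (hCB : C < B) →
      ¬ ∃ s : K →ₗ[K] (E ⧸ C),
        (Submodule.liftQ C π (hCB.le.trans hker.ge)) ∘ₗ s = LinearMap.id ∧
        ∀ g : G, (Submodule.mapQ C C (ρ g) (fun x hx => hC g x hx)) ∘ₗ s = s)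
    -- every `G`-map `E → B` has kernel not contained in `B`
    (hkernels : ∀ lam : E →ₗ[K] E, (∀ g : G, lam ∘ₗ ρ g = ρ g ∘ₗ lam) →
      LinearMap.range lam ≤ B → ¬ LinearMap.ker lam ≤ B) :
    ∀ φ : E →ₗ[K] E, (∀ g : G, φ ∘ₗ ρ g = ρ g ∘ₗ φ) →
      (∀ x ∈ B, φ x ∈ B) →
      ∃ a : K, (∀ x : E, π (φ x) = a • π x) ∧ (∀ x ∈ B, φ x = a • x) := by
  intro φ hφ hφB
  obtain ⟨e, he⟩ := hsurj 1
  set a := π (φ e) with ha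
  have hπφ : ∀ x : E, π (φ x) = a • π x := by
    intro x
    have hx : x - (π x) • e ∈ B := by
      rw [← hker, LinearMap.mem_ker]
      simp [he]
    have h1 : π (φ (x - (π x) • e)) = 0 := by
      have h0 := hφB _ hx
      rw [← hker, LinearMap.mem_ker] at h0
      exact h0
    simp only [map_sub, map_smul] at h1
    have h2 := sub_eq_zero.mp h1
    rw [h2]
    simp [ha, smul_eq_mul, mul_comm]
  refine ⟨a, hπφ, ?_⟩
  set ψ : E →ₗ[K] E := φ - a • LinearMap.id with hψ
  have hψapp : ∀ x : E, ψ x = φ x - a • x := by intro x; simp [hψ]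
  have hψcomm : ∀ g : G, ψ ∘ₗ ρ g = ρ g ∘ₗ ψ := by
    intro g
    ext x
    simp only [hψapp, LinearMap.comp_apply, LinearMap.sub_apply,
      LinearMap.smul_apply, LinearMap.id_apply]
    have h3 := congrArg (fun f : E →ₗ[K] E => f x) (hφ g)
    simp only [LinearMap.comp_apply] at h3
    rw [h3, map_sub, map_smul]
  have hψrange : LinearMap.range ψ ≤ B := by
    rintro _ ⟨x, rfl⟩
    rw [← hker, LinearMap.mem_ker, hψapp, map_sub, map_smul, hπφ, sub_self]
  have hBstable : ∀ g : G, ∀ x ∈ B, ρ g x ∈ B := by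
    intro g x hx
    rw [← hker, LinearMap.mem_ker] at hx
    rw [← hker, LinearMap.mem_ker]
    have h4 := congrArg (fun f : E →ₗ[K] K => f x) (hπ g)
    simp only [LinearMap.comp_apply] at h4
    rw [h4, hx]
  have hkerψ : ¬ LinearMap.ker ψ ≤ B := hkernels ψ hψcomm hψrange
  obtain ⟨v, hv', hvB⟩ := SetLike.not_le_iff_exists.mp hkerψ
  have hv : ψ v = 0 := LinearMap.mem_ker.mp hv'
  have hπv : π v ≠ 0 := fun h => hvB (hker ▸ LinearMap.mem_ker.mpr h)
  suffices hzero : ∀ x ∈ B, ψ x = 0 by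
    intro x hx
    have h5 := hzero x hx
    rw [hψapp] at h5
    exact sub_eq_zero.mp h5
  by_contra h
  push_neg at h
  obtain ⟨b, hbB, hbψ⟩ := h
  set C : Submodule K E := LinearMap.ker ψ ⊓ B with hC
  have hCstable : ∀ g : G, ∀ x ∈ C, ρ g x ∈ C := by
    intro g x hx
    rw [hC, Submodule.mem_inf] at hx ⊢
    obtain ⟨hx1, hx2⟩ := hx
    refine ⟨?_, hBstable g x hx2⟩
    rw [LinearMap.mem_ker]
    have h6 := congrArg (fun f : E →ₗ[K] E => f x) (hψcomm g)
    simp only [LinearMap.comp_apply] at h6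
    rw [h6, LinearMap.mem_ker.mp hx1, map_zero]
  have hCB : C < B := by
    refine lt_of_le_of_ne inf_le_right ?_
    intro hEq
    have hbC : b ∈ C := hEq ▸ hbB
    rw [hC, Submodule.mem_inf] at hbC
    exact hbψ (LinearMap.mem_ker.mp hbC.1)
  have hkey : ∀ g : G, (Submodule.Quotient.mk (ρ g v) : E ⧸ C) =
      Submodule.Quotient.mk v := by
    intro g
    rw [Submodule.Quotient.eq, hC, Submodule.mem_inf]
    constructor
    · rw [LinearMap.mem_ker, map_sub]
      have h7 := congrArg (fun f : E →ₗ[K] E => f v) (hψcomm g)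
      simp only [LinearMap.comp_apply] at h7
      rw [h7, hv]; simp
    · rw [← hker, LinearMap.mem_ker, map_sub]
      have h8 := congrArg (fun f : E →ₗ[K] K => f v) (hπ g)
      simp only [LinearMap.comp_apply] at h8
      rw [h8, sub_self]
  refine hTNS C hCstable hCB ⟨(π v)⁻¹ • LinearMap.toSpanSingleton K _
    (Submodule.Quotient.mk v), ?_, ?_⟩
  · apply LinearMap.ext_ring
    simp only [LinearMap.comp_apply, LinearMap.smul_apply,
      LinearMap.toSpanSingleton_apply, one_smul, map_smul,
      Submodule.liftQ_apply, LinearMap.id_apply]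
    field_simp
    rw [smul_eq_mul, one_div, inv_mul_cancel₀ hπv]
  · intro g
    apply LinearMap.ext_ring
    simp only [LinearMap.comp_apply, LinearMap.smul_apply,
      LinearMap.toSpanSingleton_apply, one_smul, map_smul,
      Submodule.mapQ_apply, hkey]
end
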